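/- Let G be a finite simple graph and v a vertex of G such that G admits a proper 3-coloring in which all neighbors of v receive the same color. Then for every weight function w : V(G) → ℝ>0, G contains an independent set X with w(X) ≥ (w(V(G)) + w(v))/3. -/

import Mathlib

open MeasureTheory

/-- `φ` is an `f`-coloring of `G`: it assigns to each vertex a measurable subset of `[0,1]`,
adjacent vertices get disjoint sets, and the set of `v` has measure at least `f v`. -/
def IsFracColoring {V : Type*} (G : SimpleGraph V) (f : V → ℚ) (φ : V → Set ℝ) : Prop :=
  (∀ v, φ v ⊆ Set.Icc (0 : ℝ) 1) ∧
  (∀ v, MeasurableSet (φ v)) ∧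
  (∀ u v, G.Adj u v → φ u ∩ φ v = ∅) ∧
  (∀ v, ENNReal.ofReal ((f v : ℝ)) ≤ volume (φ v))

/-- A tight `f`-coloring: the measure of each `φ v` equals `f v`. -/
def IsTightFracColoring {V : Type*} (G : SimpleGraph V) (f : V → ℚ) (φ : V → Set ℝ) : Prop :=
  IsFracColoring G f φ ∧ ∀ v, volume (φ v) = ENNReal.ofReal ((f v : ℝ))

/-- `N ≥ 1` is a common denominator of `f` if `N * f v` is an integer for every `v`. -/
def IsCommonDenom {V : Type*} (N : ℕ) (f : V → ℚ) : Prop :=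
  1 ≤ N ∧ ∀ v, ∃ m : ℤ, (N : ℚ) * f v = (m : ℚ)

/-- `ψ` is an `(f,N)`-coloring of `G`: each vertex gets a subset of `{1,…,N}`,
adjacent vertices get disjoint sets, and `|ψ v| ≥ N * f v` for every vertex `v`. -/
def IsFNColoring {V : Type*} (G : SimpleGraph V) (f : V → ℚ) (N : ℕ) (ψ : V → Finset ℕ) : Prop :=
  (∀ v, ψ v ⊆ Finset.Icc 1 N) ∧
  (∀ u v, G.Adj u v → Disjoint (ψ u) (ψ v)) ∧
  (∀ v, (N : ℚ) * f v ≤ ((ψ v).card : ℚ))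

/-- A tight `(f,N)`-coloring: `|ψ v| = N * f v` for every vertex `v`. -/
def IsTightFNColoring {V : Type*} (G : SimpleGraph V) (f : V → ℚ) (N : ℕ)
    (ψ : V → Finset ℕ) : Prop :=
  IsFNColoring G f N ψ ∧ ∀ v, ((ψ v).card : ℚ) = (N : ℚ) * f v

/-- If `G` has a proper 3-coloring in which all neighbors of `v` receive the same color,
then for every positive weight function `w` there is an independent set `X` with
`w(X) ≥ (w(V(G)) + w(v)) / 3`. -/
theorem stmt4 {V : Type*} [Fintype V] (G : SimpleGraph V) (v : V)
    (h : ∃ c : G.Coloring (Fin 3), ∀ u u', G.Adj v u → G.Adj v u' → c u = c u') :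
    ∀ w : V → ℝ, (∀ u, 0 < w u) →
      ∃ X : Finset V, (∀ a ∈ X, ∀ b ∈ X, ¬ G.Adj a b) ∧
        (∑ u, w u + w v) / 3 ≤ ∑ u ∈ X, w u := by
  classical
  obtain ⟨c, hc⟩ := h
  intro w hw
  obtain ⟨k, hk, hkne⟩ : ∃ k : Fin 3, (∀ u, G.Adj v u → c u = k) ∧ k ≠ c v := by
    by_cases hn : ∃ u, G.Adj v u
    · obtain ⟨u, hu⟩ := hn
      exact ⟨c u, fun u' hu' => hc u' u hu' hu, fun he => c.valid hu he.symm⟩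
    · push_neg at hn
      have h3 : ∀ a : Fin 3, ∃ b : Fin 3, b ≠ a := by decide
      obtain ⟨b, hb⟩ := h3 (c v)
      exact ⟨b, fun u' hu' => absurd hu' (hn u'), hb⟩
  have h3 : ∀ a k : Fin 3, ∃ j : Fin 3, j ≠ a ∧ j ≠ k := by decide
  obtain ⟨j, hj1, hj2⟩ := h3 (c v) k
  set A : Fin 3 → Finset V := fun i => Finset.univ.filter (fun u => c u = i) with hA
  have hAind : ∀ i, ∀ a ∈ A i, ∀ b ∈ A i, ¬ G.Adj a b := by
    intro i a ha b hb hab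
    simp only [hA, Finset.mem_filter] at ha hb
    exact c.valid hab (ha.2.trans hb.2.symm)
  have hvA : v ∉ A j := by
    simp only [hA, Finset.mem_filter]
    exact fun hmem => hj1 hmem.2.symm
  have hS3ind : ∀ a ∈ insert v (A j), ∀ b ∈ insert v (A j), ¬ G.Adj a b := by
    intro a ha b hb hab
    simp only [Finset.mem_insert] at ha hb
    rcases ha with rfl | ha
    · rcases hb with rfl | hb
      · exact G.irrefl hab
      · simp only [hA, Finset.mem_filter] at hb
        exact hj2 ((hk b hab).symm.trans hb.2).symm
    · rcases hb with rfl | hb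
      · simp only [hA, Finset.mem_filter] at ha
        exact hj2 ((hk a (G.adj_symm hab)).symm.trans ha.2).symm
      · exact hAind j a ha b hb hab
  have hsum : ∑ i : Fin 3, ∑ u ∈ A i, w u = ∑ u, w u := by
    rw [hA]
    exact Finset.sum_fiberwise _ _ _
  have huniv : (Finset.univ : Finset (Fin 3)) = {c v, k, j} := by
    have key : ∀ a b d : Fin 3, b ≠ a → d ≠ a → d ≠ b →
        (Finset.univ : Finset (Fin 3)) = {a, b, d} := by decide
    exact key _ _ _ hkne hj1 hj2
  have hsum3 : ∑ u ∈ A (c v), w u + ∑ u ∈ A k, w u + ∑ u ∈ A j, w u = ∑ u, w u := by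
    rw [← hsum, huniv]
    rw [Finset.sum_insert (by simp [hkne.symm, hj1.symm]),
      Finset.sum_insert (by simp [hj2.symm]), Finset.sum_singleton]
    ring
  have hS3sum : ∑ u ∈ insert v (A j), w u = w v + ∑ u ∈ A j, w u :=
    Finset.sum_insert hvA
  by_contra hcon
  push_neg at hcon
  have h1 := hcon (A (c v)) (hAind (c v))
  have h2 := hcon (A k) (hAind k)
  have h3' := hcon (insert v (A j)) hS3ind
  rw [hS3sum] at h3'
  linarith
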